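/- Let (Z_n)_{n≥1} be independent real random variables with mean 0, variance 1, and absolutely continuous densities, and let (α_n) be positive reals with ∑ α_n² < ∞. Let S = ∑_{n=1}^∞ α_n² Z_n² . Then for every d ≥ 0, lim_{h→0⁺} h^{−d}·P(S ≤ h²) = 0; i.e. P(S ≤ h²) decays faster than any power of h as h → 0. -/

import Mathlib

open MeasureTheory ProbabilityTheory Filter

/-- A function is absolutely continuous if it is an indefinite integral of a
locally integrable function. -/
def AbsCont (h : ℝ → ℝ) : Prop :=
  ∃ h' : ℝ → ℝ, LocallyIntegrable h' volume ∧
    ∀ a b : ℝ, h b - h a = ∫ t in a..b, h' t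

lemma absCont_continuous {g : ℝ → ℝ} (hg : AbsCont g) : Continuous g := by
  obtain ⟨g', hg', hint⟩ := hg
  have hii : ∀ a b : ℝ, IntervalIntegrable g' volume a b := fun a b =>
    (intervalIntegrable_iff' (f := g')).mpr (hg'.integrableOn_isCompact isCompact_uIcc)
  have : g = fun b => g 0 + ∫ t in (0:ℝ)..b, g' t := by
    funext b
    have := hint 0 b
    linarith
  rw [this]
  exact continuous_const.add (intervalIntegral.continuous_primitive hii 0)

theorem stmt11 {Ω : Type*} [MeasurableSpace Ω] (P : Measure Ω) [IsProbabilityMeasure P]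
    (Z : ℕ → Ω → ℝ) (hmeas : ∀ n, Measurable (Z n))
    (hindep : iIndepFun Z P)
    (hmean : ∀ n, ∫ ω, Z n ω ∂P = 0)
    (hvar : ∀ n, ∫ ω, (Z n ω) ^ 2 ∂P = 1)
    (f : ℕ → ℝ → ℝ)
    (hdens : ∀ n, Measure.map (Z n) P = volume.withDensity (fun x => ENNReal.ofReal (f n x)))
    (hfAC : ∀ n, AbsCont (f n))
    (α : ℕ → ℝ) (hα : ∀ n, 0 < α n) (hsum : Summable (fun n => (α n) ^ 2))
    (S : Ω → ℝ) (hS : ∀ ω, S ω = ∑' n, (α n) ^ 2 * (Z n ω) ^ 2) :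
    ∀ d : ℝ, 0 ≤ d →
      Tendsto (fun h : ℝ => h ^ (-d) * (P {ω | S ω ≤ h ^ 2}).toReal)
        (nhdsWithin 0 (Set.Ioi 0)) (nhds 0) := by
  -- bounds on the densities near 0
  have hBex : ∀ n, ∃ B : ℝ, 0 ≤ B ∧ ∀ x ∈ Set.Icc (-1:ℝ) 1, f n x ≤ B := by
    intro n
    obtain ⟨x₀, -, hx₀⟩ := (isCompact_Icc : IsCompact (Set.Icc (-1:ℝ) 1)).exists_isMaxOn
      (Set.nonempty_Icc.mpr (by norm_num)) (absCont_continuous (hfAC n)).continuousOn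
    exact ⟨max (f n x₀) 0, le_max_right _ _, fun x hx => (hx₀ hx).trans (le_max_left _ _)⟩
  choose B hB0 hB using hBex
  -- per-factor small ball estimate
  have hfactor : ∀ n, ∀ ε : ℝ, 0 < ε → ε ≤ 1 →
      P (Z n ⁻¹' Set.Icc (-ε) ε) ≤ ENNReal.ofReal ((2 * B n) * ε) := by
    intro n ε hε hε1
    rw [← Measure.map_apply (hmeas n) measurableSet_Icc, hdens n,
      withDensity_apply _ measurableSet_Icc]
    calc ∫⁻ x in Set.Icc (-ε) ε, ENNReal.ofReal (f n x)
        ≤ ∫⁻ _ in Set.Icc (-ε) ε, ENNReal.ofReal (B n) := by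
          refine setLIntegral_mono measurable_const (fun x hx => ?_)
          exact ENNReal.ofReal_le_ofReal
            (hB n x ⟨by linarith [hx.1], by linarith [hx.2]⟩)
      _ = ENNReal.ofReal (B n) * volume (Set.Icc (-ε) ε) := setLIntegral_const _ _
      _ = ENNReal.ofReal (B n) * ENNReal.ofReal (2 * ε) := by
          rw [Real.volume_Icc]; ring_nf
      _ = ENNReal.ofReal ((2 * B n) * ε) := by
          rw [← ENNReal.ofReal_mul (hB0 n)]; ring_nf
  -- integrability of Z n ^ 2
  have hZint : ∀ n, Integrable (fun ω => Z n ω ^ 2) P := by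
    intro n
    by_contra hcon
    have h1 := hvar n
    rw [integral_undef hcon] at h1
    exact zero_ne_one h1
  have hlint : ∀ n, ∫⁻ ω, ENNReal.ofReal (Z n ω ^ 2) ∂P = 1 := by
    intro n
    rw [← ofReal_integral_eq_lintegral_ofReal (hZint n)
      (ae_of_all _ fun ω => sq_nonneg _), hvar n, ENNReal.ofReal_one]
  -- a.s. summability of the series
  have hmeasE : ∀ n, Measurable (fun ω => ENNReal.ofReal (α n ^ 2 * Z n ω ^ 2)) :=
    fun n => (((hmeas n).pow_const 2).const_mul _).ennreal_ofReal
  have hkey : ∫⁻ ω, ∑' n, ENNReal.ofReal (α n ^ 2 * Z n ω ^ 2) ∂P ≠ ⊤ := by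
    rw [lintegral_tsum (fun n => (hmeasE n).aemeasurable)]
    have heq : ∀ n, ∫⁻ ω, ENNReal.ofReal (α n ^ 2 * Z n ω ^ 2) ∂P
        = ENNReal.ofReal (α n ^ 2) := by
      intro n
      simp_rw [ENNReal.ofReal_mul (sq_nonneg (α n))]
      rw [lintegral_const_mul _ ((hmeas n).pow_const 2).ennreal_ofReal, hlint n, mul_one]
    rw [tsum_congr heq, ← ENNReal.ofReal_tsum_of_nonneg (fun n => sq_nonneg _) hsum]
    exact ENNReal.ofReal_ne_top
  have hae : ∀ᵐ ω ∂P, Summable (fun n => α n ^ 2 * Z n ω ^ 2) := by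
    filter_upwards [ae_lt_top (Measurable.ennreal_tsum hmeasE) hkey] with ω hω
    have hsm := ENNReal.summable_toReal hω.ne
    exact hsm.congr fun n => ENNReal.toReal_ofReal
      (mul_nonneg (sq_nonneg _) (sq_nonneg _))
  intro d hd
  -- choose k with d < k
  set k : ℕ := ⌊d⌋₊ + 1 with hk
  have hdk : d < (k : ℝ) := by
    have := Nat.lt_floor_add_one d
    push_cast [hk]
    linarith
  set c : ℕ → ℝ := fun n => 2 * B n / α n with hc
  have hc0 : ∀ n, 0 ≤ c n := fun n =>
    div_nonneg (by linarith [hB0 n]) (hα n).le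
  set C : ℝ := ∏ n ∈ Finset.range k, c n with hC
  have hC0 : 0 ≤ C := Finset.prod_nonneg fun n _ => hc0 n
  -- main bound, for 0 < h < α n (n < k)
  have hmain : ∀ h : ℝ, 0 < h → (∀ n ∈ Finset.range k, h < α n) →
      (P {ω | S ω ≤ h ^ 2}).toReal ≤ C * h ^ k := by
    intro h hh hhα
    have hinc : {ω | S ω ≤ h ^ 2} ≤ᵐ[P]
        ⋂ n ∈ Finset.range k, Z n ⁻¹' Set.Icc (-(h / α n)) (h / α n) := by
      filter_upwards [hae] with ω hsumω hSω
      refine Set.mem_iInter₂.mpr fun n hn => Set.mem_preimage.mpr (Set.mem_Icc.mpr ?_)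
      have hterm : α n ^ 2 * Z n ω ^ 2 ≤ h ^ 2 := by
        refine le_trans (Summable.le_tsum hsumω n fun m _ =>
          mul_nonneg (sq_nonneg _) (sq_nonneg _)) ?_
        rw [← hS ω]; exact hSω
      have habs : |Z n ω| ≤ h / α n := by
        rw [le_div_iff₀ (hα n)]
        nlinarith [abs_nonneg (Z n ω), sq_abs (Z n ω), (hα n).le]
      exact abs_le.mp habs
    have hprodle : P {ω | S ω ≤ h ^ 2} ≤ ENNReal.ofReal (C * h ^ k) := by
      calc P {ω | S ω ≤ h ^ 2}
          ≤ P (⋂ n ∈ Finset.range k, Z n ⁻¹' Set.Icc (-(h / α n)) (h / α n)) :=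
            measure_mono_ae hinc
        _ = ∏ n ∈ Finset.range k, P (Z n ⁻¹' Set.Icc (-(h / α n)) (h / α n)) :=
            hindep.meas_biInter fun n _ => ⟨_, measurableSet_Icc, rfl⟩
        _ ≤ ∏ n ∈ Finset.range k, ENNReal.ofReal (c n * h) := by
            refine Finset.prod_le_prod' fun n hn => ?_
            have h1 : (0:ℝ) < h / α n := div_pos hh (hα n)
            have h2 : h / α n ≤ 1 := (div_le_one (hα n)).mpr (hhα n hn).le
            refine (hfactor n (h / α n) h1 h2).trans (le_of_eq ?_)
            congr 1
            show 2 * B n * (h / α n) = 2 * B n / α n * h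
            ring
        _ = ENNReal.ofReal (∏ n ∈ Finset.range k, (c n * h)) :=
            (ENNReal.ofReal_prod_of_nonneg fun n _ =>
              mul_nonneg (hc0 n) hh.le).symm
        _ = ENNReal.ofReal (C * h ^ k) := by
            rw [Finset.prod_mul_distrib, Finset.prod_const, Finset.card_range]
    calc (P {ω | S ω ≤ h ^ 2}).toReal
        ≤ (ENNReal.ofReal (C * h ^ k)).toReal :=
          ENNReal.toReal_mono ENNReal.ofReal_ne_top hprodle
      _ = C * h ^ k := ENNReal.toReal_ofReal
          (mul_nonneg hC0 (pow_nonneg hh.le k))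
  -- squeeze
  refine squeeze_zero' ?_ ?_ (g := fun h : ℝ => C * h ^ ((k : ℝ) - d)) ?_
  · filter_upwards [self_mem_nhdsWithin] with h hh
    exact mul_nonneg (Real.rpow_nonneg (le_of_lt hh) _) ENNReal.toReal_nonneg
  · have hev : ∀ᶠ h in nhdsWithin (0:ℝ) (Set.Ioi 0), ∀ n ∈ Finset.range k, h < α n := by
      rw [Filter.eventually_all_finset]
      intro n _
      exact eventually_nhdsWithin_of_eventually_nhds
        (Filter.Tendsto.eventually_lt_const (hα n) Filter.tendsto_id)
    filter_upwards [self_mem_nhdsWithin, hev] with h hh hhα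
    have hh : (0:ℝ) < h := hh
    calc h ^ (-d) * (P {ω | S ω ≤ h ^ 2}).toReal
        ≤ h ^ (-d) * (C * h ^ k) := by
          exact mul_le_mul_of_nonneg_left (hmain h hh hhα)
            (Real.rpow_nonneg hh.le _)
      _ = C * h ^ ((k : ℝ) - d) := by
          rw [← Real.rpow_natCast h k, mul_comm (h ^ (-d)), mul_assoc,
            ← Real.rpow_add hh, ← sub_eq_add_neg]
  · have h0 : ((0:ℝ)) ^ ((k : ℝ) - d) = 0 :=
      Real.zero_rpow (ne_of_gt (by linarith))
    have hcont : Tendsto (fun h : ℝ => h ^ ((k : ℝ) - d)) (nhds 0) (nhds 0) := by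
      have := (Real.continuousAt_rpow_const 0 ((k : ℝ) - d) (Or.inr (by linarith))).tendsto
      rwa [h0] at this
    have h2 : Tendsto (fun h : ℝ => C * h ^ ((k : ℝ) - d))
        (nhdsWithin 0 (Set.Ioi 0)) (nhds (C * 0)) :=
      (hcont.mono_left (nhdsWithin_le_nhds (s := Set.Ioi (0:ℝ)))).const_mul C
    simpa using h2
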